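/- Fix 0 < q < 1. For an integer n ≥ 0 and an integer x, define the magnetization ⟨S³_x⟩_n = W_x(n)/Z(n), where both sums run over pairs (A,B) with A a finite subset of {…,−1,0} and B a finite subset of {1,2,…} satisfying |B| = |A| + n: Z(n) = Σ_{(A,B)} q^{2(Σ_{y∈B} y − Σ_{x'∈A} x')} and W_x(n) = Σ_{(A,B)} q^{2(Σ_{y∈B} y − Σ_{x'∈A} x')} s_x(A,B), with s_x(A,B) = +1/2 if either (x ≤ 0 and x ∈ A) or (x ≥ 1 and x ∉ B), and s_x(A,B) = −1/2 otherwise. Then ⟨S³_x⟩_n = −1/2 + q^{2(n+1−x)} Σ_{k=0}^∞ (−1)^k q^{k(k+1+2(n+1−x))} whenever n ≥ x, and ⟨S³_x⟩_n = 1/2 − q^{2(x−n)} Σ_{k=0}^∞ (−1)^k q^{k(k+1+2(x−n))} whenever n ≤ x−1. -/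

import Mathlib

/-- Admissible pairs `(A,B)`: `A` a finite subset of `{…,−1,0}`, `B` a finite subset of
`{1,2,…}` with `|B| = |A| + n`. -/
def KinkPairs (n : ℕ) : Type :=
  {p : Finset ℤ × Finset ℤ //
    (∀ x ∈ p.1, x ≤ 0) ∧ (∀ y ∈ p.2, 1 ≤ y) ∧ p.2.card = p.1.card + n}

/-- The weight `q^{2(Σ_{y∈B} y − Σ_{x∈A} x)}` of a pair `(A,B)`. -/
noncomputable def kinkWeight (q : ℝ) {n : ℕ} (p : KinkPairs n) : ℝ :=
  q ^ (2 * ((∑ y ∈ p.val.2, y) - ∑ x ∈ p.val.1, x))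

/-- The value `s_x(A,B)` of the third spin component at site `x` in the configuration
`(A,B)`: `+1/2` if either (`x ≤ 0` and `x ∈ A`) or (`x ≥ 1` and `x ∉ B`), `−1/2` otherwise. -/
noncomputable def spinAt (x : ℤ) {n : ℕ} (p : KinkPairs n) : ℝ :=
  if (x ≤ 0 ∧ x ∈ p.val.1) ∨ (1 ≤ x ∧ x ∉ p.val.2) then 1/2 else -1/2

section Basic

variable {q : ℝ} {n : ℕ}

lemma zpow_finset_sum (hq : q ≠ 0) (s : Finset ℤ) (f : ℤ → ℤ) :
    q ^ (∑ i ∈ s, f i) = ∏ i ∈ s, q ^ (f i) := by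
  induction s using Finset.cons_induction with
  | empty => simp
  | cons a s ha ih => rw [Finset.sum_cons, Finset.prod_cons, zpow_add₀ hq, ih]

lemma kw_pos (hq : 0 < q) (p : KinkPairs n) : 0 < kinkWeight q p := zpow_pos hq _

lemma kw_nonneg (hq : 0 < q) (p : KinkPairs n) : 0 ≤ kinkWeight q p := (kw_pos hq p).le

/-- encoding of a kink pair as a finite set of naturals -/
def enc (p : KinkPairs n) : Finset ℕ :=
  p.val.1.image (fun a => (2 * (-a)).toNat) ∪ p.val.2.image (fun b => (2 * b - 1).toNat)

lemma mem_enc_A (r : KinkPairs n) (a : ℤ) :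
    a ∈ r.val.1 ↔ (a ≤ 0 ∧ (2 * (-a)).toNat ∈ enc r) := by
  constructor
  · intro ha
    exact ⟨r.prop.1 a ha, Finset.mem_union_left _ (Finset.mem_image_of_mem _ ha)⟩
  · rintro ⟨ha, hmem⟩
    simp only [enc, Finset.mem_union, Finset.mem_image] at hmem
    rcases hmem with ⟨a', ha', heq⟩ | ⟨b, hb, heq⟩
    · have := r.prop.1 a' ha'
      have : a' = a := by omega
      rwa [← this]
    · have := r.prop.2.1 b hb
      omega

lemma mem_enc_B (r : KinkPairs n) (b : ℤ) :
    b ∈ r.val.2 ↔ (1 ≤ b ∧ (2 * b - 1).toNat ∈ enc r) := by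
  constructor
  · intro hb
    exact ⟨r.prop.2.1 b hb, Finset.mem_union_right _ (Finset.mem_image_of_mem _ hb)⟩
  · rintro ⟨hb, hmem⟩
    simp only [enc, Finset.mem_union, Finset.mem_image] at hmem
    rcases hmem with ⟨a', ha', heq⟩ | ⟨b', hb', heq⟩
    · have := r.prop.1 a' ha'
      omega
    · have := r.prop.2.1 b' hb'
      have : b' = b := by omega
      rwa [← this]

lemma enc_injective : Function.Injective (enc (n := n)) := by
  intro p p' h
  apply Subtype.ext
  apply Prod.ext
  · ext a; rw [mem_enc_A, mem_enc_A, h]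
  · ext b; rw [mem_enc_B, mem_enc_B, h]

lemma kw_le_prod_enc (hq0 : 0 < q) (hq1 : q < 1) (p : KinkPairs n) :
    kinkWeight q p ≤ ∏ s ∈ enc p, q ^ (s : ℤ) := by
  have hq : q ≠ 0 := ne_of_gt hq0
  have hdisj : Disjoint (p.val.1.image (fun a => (2 * (-a)).toNat))
      (p.val.2.image (fun b => (2 * b - 1).toNat)) := by
    rw [Finset.disjoint_left]
    rintro s hs hs'
    obtain ⟨a, ha, rfl⟩ := Finset.mem_image.mp hs
    obtain ⟨b, hb, heq⟩ := Finset.mem_image.mp hs'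
    have := p.prop.1 a ha
    have := p.prop.2.1 b hb
    omega
  have hprod : ∏ s ∈ enc p, q ^ (s : ℤ)
      = (∏ a ∈ p.val.1, q ^ (((2 * (-a)).toNat : ℕ) : ℤ)) *
        (∏ b ∈ p.val.2, q ^ (((2 * b - 1).toNat : ℕ) : ℤ)) := by
    rw [enc, Finset.prod_union hdisj, Finset.prod_image, Finset.prod_image]
    · intro a ha b hb hab
      have := p.prop.2.1 a ha
      have := p.prop.2.1 b hb
      simp only at hab
      omega
    · intro a ha b hb hab
      have := p.prop.1 a ha
      have := p.prop.1 b hb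
      simp only at hab
      omega
  have h1 : (∏ a ∈ p.val.1, q ^ (((2 * (-a)).toNat : ℕ) : ℤ)) = ∏ a ∈ p.val.1, q ^ (-(2*a)) := by
    apply Finset.prod_congr rfl
    intro a ha
    have := p.prop.1 a ha
    congr 1
    omega
  have h2 : (∏ b ∈ p.val.2, q ^ (((2 * b - 1).toNat : ℕ) : ℤ)) = ∏ b ∈ p.val.2, q ^ (2*b - 1) := by
    apply Finset.prod_congr rfl
    intro b hb
    have := p.prop.2.1 b hb
    congr 1
    omega
  rw [hprod, h1, h2, ← zpow_finset_sum hq, ← zpow_finset_sum hq, ← zpow_add₀ hq]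
  rw [kinkWeight]
  apply zpow_le_zpow_right_of_le_one₀ hq0 hq1.le
  have e1 : ∑ a ∈ p.val.1, -(2*a) = (-2) * ∑ a ∈ p.val.1, a := by
    rw [Finset.mul_sum]; apply Finset.sum_congr rfl; intros; ring
  have e2 : ∑ b ∈ p.val.2, (2*b-1) = 2 * (∑ b ∈ p.val.2, b) - p.val.2.card := by
    rw [Finset.sum_sub_distrib, Finset.sum_const, Finset.mul_sum]
    simp [mul_comm]
  rw [e1, e2]
  have : (0:ℤ) ≤ p.val.2.card := by positivity
  linarith

end Basic

section Summab
variable {q : ℝ} {n : ℕ}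

lemma summable_kw (hq0 : 0 < q) (hq1 : q < 1) :
    Summable (fun p : KinkPairs n => kinkWeight q p) := by
  apply summable_of_sum_le (fun p => kw_nonneg hq0 p)
  intro u
  have step1 : ∑ p ∈ u, kinkWeight q p ≤ ∑ p ∈ u, ∏ s ∈ enc p, q ^ (s : ℤ) :=
    Finset.sum_le_sum (fun p _ => kw_le_prod_enc hq0 hq1 p)
  have step2 : ∑ p ∈ u, ∏ s ∈ enc p, q ^ (s : ℤ)
      = ∑ S ∈ u.image enc, ∏ s ∈ S, q ^ (s : ℤ) := by
    rw [Finset.sum_image (fun p _ p' _ h => enc_injective h)]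
  set N : ℕ := ((u.image enc).sup (fun S => S.sup id)) + 1 with hN
  have hsub : u.image enc ⊆ (Finset.range N).powerset := by
    intro S hS
    rw [Finset.mem_powerset]
    intro s hs
    rw [Finset.mem_range]
    calc s = id s := rfl
    _ ≤ S.sup id := Finset.le_sup hs
    _ ≤ (u.image enc).sup (fun S => S.sup id) := Finset.le_sup hS
    _ < N := by omega
  have step3 : ∑ S ∈ u.image enc, ∏ s ∈ S, q ^ (s : ℤ)
      ≤ ∑ S ∈ (Finset.range N).powerset, ∏ s ∈ S, q ^ (s : ℤ) := by
    apply Finset.sum_le_sum_of_subset_of_nonneg hsub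
    intro S _ _
    exact Finset.prod_nonneg (fun s _ => zpow_nonneg hq0.le _)
  have step4 : ∑ S ∈ (Finset.range N).powerset, ∏ s ∈ S, q ^ (s : ℤ)
      = ∏ s ∈ Finset.range N, (q ^ (s : ℤ) + 1) := by
    rw [Finset.prod_add]
    simp
  have step5 : ∏ s ∈ Finset.range N, (q ^ (s : ℤ) + 1)
      ≤ Real.exp (∑ s ∈ Finset.range N, q ^ (s : ℤ)) := by
    rw [Real.exp_sum]
    apply Finset.prod_le_prod
    · intro s _; positivity
    · intro s _; exact Real.add_one_le_exp _
  have step6 : ∑ s ∈ Finset.range N, q ^ (s : ℤ) ≤ (1 - q)⁻¹ := by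
    have he : ∀ s ∈ Finset.range N, q ^ (s : ℤ) = q ^ s := fun s _ => zpow_natCast q s
    rw [Finset.sum_congr rfl he]
    have hsummable : Summable (fun s : ℕ => q ^ s) := summable_geometric_of_lt_one hq0.le hq1
    calc ∑ s ∈ Finset.range N, q ^ s ≤ ∑' s : ℕ, q ^ s :=
          Summable.sum_le_tsum _ (fun s _ => pow_nonneg hq0.le _) hsummable
    _ = (1 - q)⁻¹ := tsum_geometric_of_lt_one hq0.le hq1
  calc ∑ p ∈ u, kinkWeight q p ≤ _ := step1
  _ = _ := step2
  _ ≤ _ := step3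
  _ = _ := step4
  _ ≤ Real.exp (∑ s ∈ Finset.range N, q ^ (s : ℤ)) := step5
  _ ≤ Real.exp ((1 - q)⁻¹) := Real.exp_le_exp.mpr step6

lemma summable_kw_spin (hq0 : 0 < q) (hq1 : q < 1) (x : ℤ) :
    Summable (fun p : KinkPairs n => kinkWeight q p * spinAt x p) := by
  apply Summable.of_norm_bounded (summable_kw hq0 hq1)
  intro p
  rw [norm_mul]
  have h1 : ‖spinAt x p‖ ≤ 1 := by
    rw [spinAt]
    split_ifs <;> simp [abs_le] <;> norm_num
  calc ‖kinkWeight q p‖ * ‖spinAt x p‖ ≤ ‖kinkWeight q p‖ * 1 := by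
        apply mul_le_mul_of_nonneg_left h1 (norm_nonneg _)
  _ = kinkWeight q p := by rw [mul_one, Real.norm_eq_abs, abs_of_nonneg (kw_nonneg hq0 p)]

end Summab
section Equivs
variable {q : ℝ} {n : ℕ}

lemma mem_image_add_one (s : Finset ℤ) (x : ℤ) : x ∈ s.image (· + 1) ↔ x - 1 ∈ s := by
  simp only [Finset.mem_image]
  constructor
  · rintro ⟨a, ha, rfl⟩; simpa using ha
  · intro h; exact ⟨x - 1, h, by ring⟩

lemma mem_image_one_sub (s : Finset ℤ) (x : ℤ) : x ∈ s.image (1 - ·) ↔ 1 - x ∈ s := by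
  simp only [Finset.mem_image]
  constructor
  · rintro ⟨a, ha, rfl⟩; simpa using ha
  · intro h; exact ⟨1 - x, h, by ring⟩

lemma image_add_sub_cancel (s : Finset ℤ) : (s.image (· + 1)).image (· - 1) = s := by
  rw [Finset.image_image]; ext a; simp

lemma image_sub_add_cancel (s : Finset ℤ) : (s.image (· - 1)).image (· + 1) = s := by
  rw [Finset.image_image]; ext a; simp

lemma image_one_sub_one_sub (s : Finset ℤ) : (s.image (1 - ·)).image (1 - ·) = s := by
  rw [Finset.image_image]; ext a; simp

lemma sum_image_add_one (s : Finset ℤ) : ∑ y ∈ s.image (· + 1), y = (∑ y ∈ s, y) + s.card := by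
  rw [Finset.sum_image (fun a _ b _ h => by omega), Finset.sum_add_distrib, Finset.sum_const]
  simp [mul_comm]

lemma sum_image_sub_one (s : Finset ℤ) : ∑ y ∈ s.image (· - 1), y = (∑ y ∈ s, y) - s.card := by
  rw [Finset.sum_image (fun a _ b _ h => by omega), Finset.sum_sub_distrib, Finset.sum_const]
  simp [mul_comm]

lemma sum_image_one_sub (s : Finset ℤ) : ∑ y ∈ s.image (1 - ·), y = s.card - ∑ y ∈ s, y := by
  rw [Finset.sum_image (fun a _ b _ h => by omega), Finset.sum_sub_distrib, Finset.sum_const]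
  simp [mul_comm]

lemma card_image_shift (s : Finset ℤ) (f : ℤ → ℤ) (hf : Function.Injective f) :
    (s.image f).card = s.card := Finset.card_image_of_injective s hf

/-- translation map: sector `n` to sector `n+1` -/
def Tfun (n : ℕ) (p : KinkPairs n) : KinkPairs (n + 1) :=
    if h : (0:ℤ) ∈ p.val.1 then
      ⟨((p.val.1.erase 0).image (· + 1), p.val.2.image (· + 1)), by
        obtain ⟨hA, hB, hc⟩ := p.prop
        refine ⟨?_, ?_, ?_⟩
        · intro a ha
          rw [mem_image_add_one, Finset.mem_erase] at ha
          have := hA _ ha.2; omega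
        · intro b hb
          rw [mem_image_add_one] at hb
          have := hB _ hb; omega
        · rw [card_image_shift _ _ (fun a b h => by omega),
            card_image_shift _ _ (fun a b h => by omega), Finset.card_erase_of_mem h]
          have : 1 ≤ p.val.1.card := Finset.card_pos.mpr ⟨0, h⟩
          omega⟩
    else
      ⟨(p.val.1.image (· + 1), insert 1 (p.val.2.image (· + 1))), by
        obtain ⟨hA, hB, hc⟩ := p.prop
        refine ⟨?_, ?_, ?_⟩
        · intro a ha
          rw [mem_image_add_one] at ha
          have h2 := hA _ ha
          rcases lt_or_eq_of_le h2 with h3 | h3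
          · omega
          · exact absurd (by rw [show a - 1 = 0 by omega] at ha; exact ha) h
        · intro b hb
          rcases Finset.mem_insert.mp hb with rfl | hb'
          · omega
          · rw [mem_image_add_one] at hb'; have := hB _ hb'; omega
        · have h1 : (1:ℤ) ∉ p.val.2.image (· + 1) := by
            rw [mem_image_add_one]; intro hc'; have := hB _ hc'; omega
          rw [Finset.card_insert_of_notMem h1, card_image_shift _ _ (fun a b h => by omega),
            card_image_shift _ _ (fun a b h => by omega)]
          omega⟩
def Tinv (n : ℕ) (p : KinkPairs (n + 1)) : KinkPairs n :=
    if h : (1:ℤ) ∈ p.val.2 then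
      ⟨(p.val.1.image (· - 1), (p.val.2.erase 1).image (· - 1)), by
        obtain ⟨hA, hB, hc⟩ := p.prop
        refine ⟨?_, ?_, ?_⟩
        · intro a ha
          rw [Finset.mem_image] at ha
          obtain ⟨a', ha', rfl⟩ := ha
          have := hA _ ha'; omega
        · intro b hb
          rw [Finset.mem_image] at hb
          obtain ⟨b', hb', rfl⟩ := hb
          rw [Finset.mem_erase] at hb'
          have := hB _ hb'.2
          have := hb'.1
          omega
        · rw [card_image_shift _ _ (fun a b h => by omega),
            card_image_shift _ _ (fun a b h => by omega), Finset.card_erase_of_mem h]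
          omega⟩
    else
      ⟨(insert 0 (p.val.1.image (· - 1)), p.val.2.image (· - 1)), by
        obtain ⟨hA, hB, hc⟩ := p.prop
        refine ⟨?_, ?_, ?_⟩
        · intro a ha
          rcases Finset.mem_insert.mp ha with rfl | ha'
          · omega
          · rw [Finset.mem_image] at ha'
            obtain ⟨a', ha', rfl⟩ := ha'
            have := hA _ ha'; omega
        · intro b hb
          rw [Finset.mem_image] at hb
          obtain ⟨b', hb', rfl⟩ := hb
          have h2 := hB _ hb'
          rcases lt_or_eq_of_le h2 with h3 | h3
          · omega
          · exact absurd (by rwa [← h3] at hb') h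
        · have h0 : (0:ℤ) ∉ p.val.1.image (· - 1) := by
            rw [Finset.mem_image]
            rintro ⟨a, ha, heq⟩
            have := hA _ ha; omega
          rw [Finset.card_insert_of_notMem h0, card_image_shift _ _ (fun a b h => by omega),
            card_image_shift _ _ (fun a b h => by omega)]
          omega⟩
lemma Tfun_val_pos {n : ℕ} (p : KinkPairs n) (h : (0:ℤ) ∈ p.val.1) :
    (Tfun n p).val = ((p.val.1.erase 0).image (· + 1), p.val.2.image (· + 1)) := by
  exact congrArg Subtype.val (dif_pos h : Tfun n p = _)

lemma Tfun_val_neg {n : ℕ} (p : KinkPairs n) (h : (0:ℤ) ∉ p.val.1) :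
    (Tfun n p).val = (p.val.1.image (· + 1), insert 1 (p.val.2.image (· + 1))) := by
  exact congrArg Subtype.val (dif_neg h : Tfun n p = _)

lemma Tinv_val_pos {n : ℕ} (p : KinkPairs (n+1)) (h : (1:ℤ) ∈ p.val.2) :
    (Tinv n p).val = (p.val.1.image (· - 1), (p.val.2.erase 1).image (· - 1)) := by
  exact congrArg Subtype.val (dif_pos h : Tinv n p = _)

lemma Tinv_val_neg {n : ℕ} (p : KinkPairs (n+1)) (h : (1:ℤ) ∉ p.val.2) :
    (Tinv n p).val = (insert 0 (p.val.1.image (· - 1)), p.val.2.image (· - 1)) := by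
  exact congrArg Subtype.val (dif_neg h : Tinv n p = _)

lemma Tleft {n : ℕ} (p : KinkPairs n) : Tinv n (Tfun n p) = p := by
  have hB := p.prop.2.1
  apply Subtype.ext
  by_cases h : (0:ℤ) ∈ p.val.1
  · have hval := Tfun_val_pos p h
    have h1 : (1:ℤ) ∉ (Tfun n p).val.2 := by
      rw [hval]; dsimp only; rw [mem_image_add_one]
      intro hc'; have := hB _ hc'; omega
    rw [Tinv_val_neg _ h1, hval]
    dsimp only
    rw [image_add_sub_cancel, image_add_sub_cancel]
    refine Prod.ext ?_ rfl
    dsimp only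
    rw [Finset.insert_erase h]
  · have hval := Tfun_val_neg p h
    have h1 : (1:ℤ) ∈ (Tfun n p).val.2 := by
      rw [hval]; exact Finset.mem_insert_self _ _
    rw [Tinv_val_pos _ h1, hval]
    dsimp only
    have h2 : (1:ℤ) ∉ p.val.2.image (· + 1) := by
      rw [mem_image_add_one]; intro hc'; have := hB _ hc'; omega
    rw [Finset.erase_insert h2, image_add_sub_cancel, image_add_sub_cancel]

lemma Tright {n : ℕ} (p : KinkPairs (n+1)) : Tfun n (Tinv n p) = p := by
  have hA := p.prop.1
  apply Subtype.ext
  by_cases h : (1:ℤ) ∈ p.val.2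
  · have hval := Tinv_val_pos p h
    have h0 : (0:ℤ) ∉ (Tinv n p).val.1 := by
      rw [hval]; dsimp only; rw [Finset.mem_image]
      rintro ⟨a, ha, heq⟩; have := hA _ ha; omega
    rw [Tfun_val_neg _ h0, hval]
    dsimp only
    rw [image_sub_add_cancel]
    refine Prod.ext rfl ?_
    dsimp only
    rw [image_sub_add_cancel, Finset.insert_erase h]
  · have hval := Tinv_val_neg p h
    have h0 : (0:ℤ) ∈ (Tinv n p).val.1 := by
      rw [hval]; exact Finset.mem_insert_self _ _
    rw [Tfun_val_pos _ h0, hval]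
    dsimp only
    have h2 : (0:ℤ) ∉ p.val.1.image (· - 1) := by
      rw [Finset.mem_image]; rintro ⟨a, ha, heq⟩; have := hA _ ha; omega
    rw [Finset.erase_insert h2, image_sub_add_cancel, image_sub_add_cancel]

def eT (n : ℕ) : KinkPairs n ≃ KinkPairs (n + 1) :=
  ⟨Tfun n, Tinv n, Tleft, Tright⟩

lemma eT_apply {n : ℕ} (p : KinkPairs n) : (eT n) p = Tfun n p := rfl

lemma kw_eT (hq0 : 0 < q) (p : KinkPairs n) :
    kinkWeight q ((eT n) p) = q ^ (2 * ((n : ℤ) + 1)) * kinkWeight q p := by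
  have hc := p.prop.2.2
  have hq : q ≠ 0 := ne_of_gt hq0
  rw [kinkWeight, kinkWeight, ← zpow_add₀ hq]
  congr 1
  by_cases h : (0:ℤ) ∈ p.val.1
  · show 2 * ((∑ y ∈ ((eT n) p).val.2, y) - ∑ a ∈ ((eT n) p).val.1, a) = _
    have he : ((eT n) p).val = ((p.val.1.erase 0).image (· + 1), p.val.2.image (· + 1)) := by
      rw [eT_apply, Tfun_val_pos p h]
    rw [he]
    dsimp only
    rw [sum_image_add_one, sum_image_add_one, Finset.sum_erase _ (by simp),
      Finset.card_erase_of_mem h]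
    have h1 : 1 ≤ p.val.1.card := Finset.card_pos.mpr ⟨0, h⟩
    push_cast [hc]
    have : ((p.val.1.card : ℤ) - 1 : ℤ) = (((p.val.1.card - 1 : ℕ) : ℤ)) := by omega
    omega
  · have he : ((eT n) p).val = (p.val.1.image (· + 1), insert 1 (p.val.2.image (· + 1))) := by
      rw [eT_apply, Tfun_val_neg p h]
    rw [he]
    dsimp only
    have h1 : (1:ℤ) ∉ p.val.2.image (· + 1) := by
      rw [mem_image_add_one]; intro hc'; have := p.prop.2.1 _ hc'; omega
    rw [Finset.sum_insert h1, sum_image_add_one, sum_image_add_one]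
    push_cast [hc]
    omega

lemma spin_eT {n : ℕ} (x : ℤ) (p : KinkPairs n) : spinAt x ((eT n) p) = spinAt (x - 1) p := by
  have hA := p.prop.1
  have hB := p.prop.2.1
  rw [spinAt, spinAt]
  apply if_congr _ rfl rfl
  by_cases h : (0:ℤ) ∈ p.val.1
  · have he : ((eT n) p).val = ((p.val.1.erase 0).image (· + 1), p.val.2.image (· + 1)) := by
      rw [eT_apply, Tfun_val_pos p h]
    rw [he]
    dsimp only
    rw [mem_image_add_one, mem_image_add_one, Finset.mem_erase]
    by_cases hP : x - 1 ∈ p.val.1 <;> by_cases hQ : x - 1 ∈ p.val.2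
    · have := hA _ hP; have := hB _ hQ; omega
    · have h1 := hA _ hP
      simp only [hP, hQ, ne_eq, and_true, true_and, and_false, false_and, or_false, false_or, or_true, true_or,
        not_false_iff, not_true, not_not, iff_true, iff_false, true_iff, false_iff]
      omega
    · have h1 := hB _ hQ
      have hx : x ≠ 1 := by
        intro hxx; apply hP; rw [hxx]; simpa using h
      simp only [hP, hQ, ne_eq, and_true, true_and, and_false, false_and, or_false, false_or, or_true, true_or,
        not_true, not_false_iff, not_true, not_not, iff_true, iff_false, true_iff, false_iff]
      try omega
    · have hx : x ≠ 1 := by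
        intro hxx; apply hP; rw [hxx]; simpa using h
      simp only [hP, hQ, ne_eq, and_true, true_and, and_false, false_and, or_false, false_or, or_true, true_or,
        not_false_iff, not_true, not_not, iff_true, iff_false, true_iff, false_iff]
      omega
  · have he : ((eT n) p).val = (p.val.1.image (· + 1), insert 1 (p.val.2.image (· + 1))) := by
      rw [eT_apply, Tfun_val_neg p h]
    rw [he]
    dsimp only
    rw [mem_image_add_one, Finset.mem_insert, mem_image_add_one]
    by_cases hP : x - 1 ∈ p.val.1 <;> by_cases hQ : x - 1 ∈ p.val.2
    · have := hA _ hP; have := hB _ hQ; omega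
    · have h1 := hA _ hP
      have hx : x ≠ 1 := by
        intro hxx; apply h; rw [hxx] at hP; simpa using hP
      simp only [hP, hQ, ne_eq, and_true, true_and, and_false, false_and, or_false, false_or, or_true, true_or,
        not_false_iff, not_true, not_not, iff_true, iff_false, true_iff, false_iff]
      omega
    · have h1 := hB _ hQ
      simp only [hP, hQ, ne_eq, and_true, true_and, and_false, false_and, or_false, false_or, or_true, true_or,
        not_true, not_false_iff, not_true, not_not, iff_true, iff_false, true_iff, false_iff]
      try omega
    · simp only [hP, hQ, ne_eq, and_true, true_and, and_false, false_and, or_false, false_or, or_true, true_or,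
        not_false_iff, not_true, not_not, iff_true, iff_false, true_iff, false_iff]
      omega

end Equivs
section Equivs2
variable {q : ℝ} {n : ℕ}

/-- reflection equivalence at sector 0 -/
def eR : KinkPairs 0 ≃ KinkPairs 0 where
  toFun p := ⟨(p.val.2.image (1 - ·), p.val.1.image (1 - ·)), by
    obtain ⟨hA, hB, hc⟩ := p.prop
    refine ⟨?_, ?_, ?_⟩
    · intro a ha
      rw [mem_image_one_sub] at ha
      have := hB _ ha; omega
    · intro b hb
      rw [mem_image_one_sub] at hb
      have := hA _ hb; omega
    · rw [card_image_shift _ _ (fun a b h => by omega),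
        card_image_shift _ _ (fun a b h => by omega)]
      omega⟩
  invFun p := ⟨(p.val.2.image (1 - ·), p.val.1.image (1 - ·)), by
    obtain ⟨hA, hB, hc⟩ := p.prop
    refine ⟨?_, ?_, ?_⟩
    · intro a ha
      rw [mem_image_one_sub] at ha
      have := hB _ ha; omega
    · intro b hb
      rw [mem_image_one_sub] at hb
      have := hA _ hb; omega
    · rw [card_image_shift _ _ (fun a b h => by omega),
        card_image_shift _ _ (fun a b h => by omega)]
      omega⟩
  left_inv p := by
    apply Subtype.ext
    dsimp only
    rw [image_one_sub_one_sub, image_one_sub_one_sub]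
  right_inv p := by
    apply Subtype.ext
    dsimp only
    rw [image_one_sub_one_sub, image_one_sub_one_sub]

lemma eR_val (p : KinkPairs 0) :
    (eR p).val = (p.val.2.image (1 - ·), p.val.1.image (1 - ·)) := rfl

lemma kw_eR (p : KinkPairs 0) : kinkWeight q (eR p) = kinkWeight q p := by
  have hc := p.prop.2.2
  rw [kinkWeight, kinkWeight]
  congr 1
  rw [eR_val]
  dsimp only
  rw [sum_image_one_sub, sum_image_one_sub]
  push_cast [hc]
  ring

lemma spin_eR (x : ℤ) (p : KinkPairs 0) : spinAt x (eR p) = -spinAt (1 - x) p := by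
  have hA := p.prop.1
  have hB := p.prop.2.1
  rw [spinAt, spinAt, eR_val]
  dsimp only
  have key : ((x ≤ 0 ∧ x ∈ p.val.2.image (1 - ·)) ∨ (1 ≤ x ∧ x ∉ p.val.1.image (1 - ·))) ↔
      ¬((1 - x ≤ 0 ∧ 1 - x ∈ p.val.1) ∨ (1 ≤ 1 - x ∧ 1 - x ∉ p.val.2)) := by
    rw [mem_image_one_sub, mem_image_one_sub]
    by_cases hP : 1 - x ∈ p.val.1 <;> by_cases hQ : 1 - x ∈ p.val.2
    · have := hA _ hP; have := hB _ hQ; omega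
    · have h1 := hA _ hP
      simp only [hP, hQ, and_true, true_and, and_false, false_and, or_false, false_or,
        or_true, true_or, not_false_iff, not_true, not_not, iff_true, iff_false, true_iff, false_iff, not_or, not_and, not_le]
      omega
    · have h1 := hB _ hQ
      simp only [hP, hQ, and_true, true_and, and_false, false_and, or_false, false_or,
        or_true, true_or, not_false_iff, not_true, not_not, iff_true, iff_false, true_iff, false_iff, not_or, not_and, not_le]
      omega
    · simp only [hP, hQ, and_true, true_and, and_false, false_and, or_false, false_or,
        or_true, true_or, not_false_iff, not_true, not_not, iff_true, iff_false, true_iff, false_iff, not_or, not_and, not_le]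
      omega
  by_cases h : (1 - x ≤ 0 ∧ 1 - x ∈ p.val.1) ∨ (1 ≤ 1 - x ∧ 1 - x ∉ p.val.2)
  · rw [if_pos h, if_neg (by rw [key]; exact not_not_intro h)]
    norm_num
  · rw [if_neg h, if_pos (key.mpr h)]
    norm_num

/-- the split equivalence: pairs in sector `n` with `x ∈ A` correspond to pairs in
sector `n+1` with `x ∉ A` -/
def eS (x : ℤ) (hx : x ≤ 0) (n : ℕ) :
    {p : KinkPairs n // x ∈ p.val.1} ≃ {p : KinkPairs (n+1) // x ∉ p.val.1} where
  toFun r := ⟨⟨(r.val.val.1.erase x, r.val.val.2), by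
      obtain ⟨hA, hB, hc⟩ := r.val.prop
      refine ⟨fun a ha => hA _ (Finset.mem_of_mem_erase ha), hB, ?_⟩
      · dsimp only
        rw [Finset.card_erase_of_mem r.prop]
        have : 1 ≤ r.val.val.1.card := Finset.card_pos.mpr ⟨x, r.prop⟩
        omega⟩,
    by simp [Finset.mem_erase]⟩
  invFun r := ⟨⟨(insert x r.val.val.1, r.val.val.2), by
      obtain ⟨hA, hB, hc⟩ := r.val.prop
      refine ⟨?_, hB, ?_⟩
      · intro a ha
        rcases Finset.mem_insert.mp ha with rfl | ha'
        · exact hx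
        · exact hA _ ha'
      · dsimp only
        rw [Finset.card_insert_of_notMem r.prop]
        omega⟩,
    Finset.mem_insert_self _ _⟩
  left_inv r := by
    apply Subtype.ext
    apply Subtype.ext
    dsimp only
    rw [Finset.insert_erase r.prop]
  right_inv r := by
    apply Subtype.ext
    apply Subtype.ext
    dsimp only
    rw [Finset.erase_insert r.prop]

lemma kw_eS (hq0 : 0 < q) (x : ℤ) (hx : x ≤ 0) (r : {p : KinkPairs n // x ∈ p.val.1}) :
    kinkWeight q ((eS x hx n r).val) = q ^ (2 * x) * kinkWeight q r.val := by
  have hq : q ≠ 0 := ne_of_gt hq0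
  have hq' : kinkWeight q ((eS x hx n r).val)
      = q ^ (2 * ((∑ y ∈ r.val.val.2, y) - ∑ a ∈ r.val.val.1.erase x, a)) := rfl
  rw [hq', kinkWeight, ← zpow_add₀ hq]
  congr 1
  have he : ∑ a ∈ r.val.val.1.erase x, a = (∑ a ∈ r.val.val.1, a) - x := by
    rw [← Finset.sum_erase_add _ _ r.prop]; ring
  rw [he]
  ring

end Equivs2
section Analysis
variable {q : ℝ} {n : ℕ} {x : ℤ}

noncomputable def Zf (q : ℝ) (n : ℕ) : ℝ := ∑' p : KinkPairs n, kinkWeight q p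

noncomputable def Wf (q : ℝ) (n : ℕ) (x : ℤ) : ℝ :=
  ∑' p : KinkPairs n, kinkWeight q p * spinAt x p

noncomputable def Gf (q : ℝ) (n : ℕ) (x : ℤ) : ℝ :=
  ∑' p : {p : KinkPairs n // x ∉ p.val.1}, kinkWeight q p.val

lemma summable_sub (hq0 : 0 < q) (hq1 : q < 1) (P : KinkPairs n → Prop) :
    Summable (fun r : {p : KinkPairs n // P p} => kinkWeight q r.val) :=
  (summable_kw hq0 hq1 (n := n)).subtype {p | P p}

lemma Z_pos (hq0 : 0 < q) (hq1 : q < 1) : 0 < Zf q n := by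
  refine Summable.tsum_pos (summable_kw hq0 hq1) (kw_nonneg hq0)
    ⟨(∅, Finset.Icc 1 (n : ℤ)), ?_⟩ (kw_pos hq0 _)
  refine ⟨by simp, fun y hy => (Finset.mem_Icc.mp hy).1, ?_⟩
  simp [Int.card_Icc]

lemma Z_succ (hq0 : 0 < q) (hq1 : q < 1) :
    Zf q (n + 1) = q ^ (2 * ((n : ℤ) + 1)) * Zf q n := by
  rw [Zf, ← Equiv.tsum_eq (eT n) (fun p => kinkWeight q p),
    tsum_congr (fun p => kw_eT hq0 p), tsum_mul_left]
  rfl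

lemma W_succ (hq0 : 0 < q) (hq1 : q < 1) :
    Wf q (n + 1) x = q ^ (2 * ((n : ℤ) + 1)) * Wf q n ((x : ℤ) - 1) := by
  rw [Wf, ← Equiv.tsum_eq (eT n) (fun p => kinkWeight q p * spinAt x p)]
  rw [tsum_congr (fun p => by rw [kw_eT hq0 p, spin_eT x p, mul_assoc]), tsum_mul_left]
  rfl

lemma Z_formula (hq0 : 0 < q) (hq1 : q < 1) (n : ℕ) :
    Zf q n = q ^ ((n : ℤ) * ((n : ℤ) + 1)) * Zf q 0 := by
  have hq : q ≠ 0 := ne_of_gt hq0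
  induction n with
  | zero => simp
  | succ m ih =>
    rw [Z_succ hq0 hq1, ih, ← mul_assoc, ← zpow_add₀ hq]
    congr 2
    push_cast
    ring

lemma ratio_reduction (hq0 : 0 < q) (hq1 : q < 1) (n : ℕ) (x : ℤ) :
    Wf q n x / Zf q n = Wf q 0 (x - n) / Zf q 0 := by
  induction n generalizing x with
  | zero => simp
  | succ m ih =>
    have hc : q ^ (2 * ((m : ℤ) + 1)) ≠ 0 := by
      apply zpow_ne_zero; exact ne_of_gt hq0
    rw [W_succ hq0 hq1, Z_succ hq0 hq1, mul_div_mul_left _ _ hc, ih (x - 1)]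
    congr 2
    push_cast
    ring

lemma tsum_in (hq0 : 0 < q) (hq1 : q < 1) (hx : x ≤ 0) :
    ∑' r : {p : KinkPairs n // x ∈ p.val.1}, kinkWeight q r.val
      = q ^ (-(2 * x)) * Gf q (n + 1) x := by
  have hq : q ≠ 0 := ne_of_gt hq0
  have h := Equiv.tsum_eq (eS x hx n) (fun r : {p : KinkPairs (n+1) // x ∉ p.val.1} => kinkWeight q r.val)
  rw [tsum_congr (fun r => kw_eS hq0 x hx r), tsum_mul_left] at h
  have h2 : q ^ (2 * x) ≠ 0 := zpow_ne_zero _ hq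
  rw [Gf, ← h, ← mul_assoc, ← zpow_add₀ hq]
  rw [show -(2 * x) + 2 * x = 0 by ring, zpow_zero, one_mul]

lemma Z_split (hq0 : 0 < q) (hq1 : q < 1) (hx : x ≤ 0) :
    Zf q n = q ^ (-(2 * x)) * Gf q (n + 1) x + Gf q n x := by
  have h := Summable.tsum_add_tsum_compl (f := fun p : KinkPairs n => kinkWeight q p)
    (s := {p : KinkPairs n | x ∈ p.val.1})
    (summable_sub hq0 hq1 _) (summable_sub hq0 hq1 _)
  have h1 : (∑' (r : ↥{p : KinkPairs n | x ∈ p.val.1}), kinkWeight q r.val)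
      = q ^ (-(2 * x)) * Gf q (n + 1) x := tsum_in hq0 hq1 hx
  have h2 : (∑' (r : ↥({p : KinkPairs n | x ∈ p.val.1}ᶜ)), kinkWeight q r.val)
      = Gf q n x := rfl
  rw [Zf, ← h, h1, h2]

lemma G_nonneg (hq0 : 0 < q) : 0 ≤ Gf q n x :=
  tsum_nonneg (fun r => kw_nonneg hq0 r.val)

lemma G_le_Z (hq0 : 0 < q) (hq1 : q < 1) : Gf q n x ≤ Zf q n := by
  apply Summable.tsum_le_tsum_of_inj Subtype.val Subtype.val_injective
    (fun c _ => kw_nonneg hq0 c) (fun r => le_refl _)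
    (summable_sub hq0 hq1 _) (summable_kw hq0 hq1)

/-- the normalized series term -/
noncomputable def bb (q : ℝ) (x : ℤ) (k : ℕ) : ℝ := q ^ (((k:ℤ) + 1) * ((k:ℤ) + 2 - 2 * x))

lemma partial_identity (hq0 : 0 < q) (hq1 : q < 1) (hx : x ≤ 0) (K : ℕ) :
    q ^ (-(2 * x)) * Gf q 1 x
      = (∑ k ∈ Finset.range K, (-1 : ℝ) ^ k * (bb q x k * Zf q 0))
        + (-1 : ℝ) ^ K * (q ^ (-(2 * x) * ((K : ℤ) + 1)) * Gf q (K + 1) x) := by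
  have hq : q ≠ 0 := ne_of_gt hq0
  induction K with
  | zero =>
    simp only [Finset.range_zero, Finset.sum_empty, pow_zero, zero_add, one_mul]
    congr 2
    push_cast
    ring
  | succ K ih =>
    rw [ih, Finset.sum_range_succ]
    have hG : Gf q (K + 1) x = Zf q (K + 1) - q ^ (-(2 * x)) * Gf q (K + 2) x := by
      have := Z_split (n := K + 1) hq0 hq1 hx
      linarith
    have hZK : q ^ (-(2 * x) * ((K : ℤ) + 1)) * Zf q (K + 1) = bb q x K * Zf q 0 := by
      rw [Z_formula hq0 hq1 (K + 1), ← mul_assoc, ← zpow_add₀ hq, bb]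
      congr 2
      push_cast
      ring
    have hsh : q ^ (-(2 * x) * ((K : ℤ) + 1)) * q ^ (-(2 * x))
        = q ^ (-(2 * x) * ((K : ℤ) + 1 + 1)) := by
      rw [← zpow_add₀ hq]
      congr 1
      ring
    rw [hG]
    have expand : (-1 : ℝ) ^ K * (q ^ (-(2 * x) * ((K : ℤ) + 1)) *
        (Zf q (K + 1) - q ^ (-(2 * x)) * Gf q (K + 2) x))
        = (-1 : ℝ) ^ K * (bb q x K * Zf q 0)
          + (-1 : ℝ) ^ (K + 1) * (q ^ (-(2 * x) * ((K : ℤ) + 1 + 1)) * Gf q (K + 2) x) := by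
      rw [pow_succ, ← hsh, ← hZK]
      ring
    rw [expand]
    have : ((K + 1 : ℕ) : ℤ) + 1 = ((K : ℤ) + 1 + 1) := by push_cast; ring
    rw [show (Gf q (K + 1 + 1) x) = Gf q (K + 2) x by norm_num, this]
    ring

lemma bb_le (hq0 : 0 < q) (hq1 : q < 1) (hx : x ≤ 0) (k : ℕ) :
    bb q x k ≤ q ^ k := by
  rw [bb, ← zpow_natCast q k]
  apply zpow_le_zpow_right_of_le_one₀ hq0 hq1.le
  have h2 : (1:ℤ) ≤ (k:ℤ) + 2 - 2 * x := by omega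
  have h3 : (0:ℤ) ≤ (k:ℤ) := Int.natCast_nonneg k
  nlinarith

lemma bb_pos (hq0 : 0 < q) (k : ℕ) : 0 < bb q x k := zpow_pos hq0 _

lemma summable_series (hq0 : 0 < q) (hq1 : q < 1) (hx : x ≤ 0) :
    Summable (fun k : ℕ => (-1 : ℝ) ^ k * (bb q x k * Zf q 0)) := by
  apply Summable.of_norm_bounded (g := fun k : ℕ => q ^ k * Zf q 0)
    ((summable_geometric_of_lt_one hq0.le hq1).mul_right _)
  intro k
  rw [norm_mul, norm_pow, norm_neg, norm_one, one_pow, one_mul, norm_mul]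
  rw [Real.norm_eq_abs, Real.norm_eq_abs, abs_of_pos (bb_pos hq0 k),
    abs_of_pos (Z_pos hq0 hq1)]
  exact mul_le_mul_of_nonneg_right (bb_le hq0 hq1 hx k) (Z_pos hq0 hq1).le

lemma tail_le (hq0 : 0 < q) (hq1 : q < 1) (hx : x ≤ 0) (K : ℕ) :
    q ^ (-(2 * x) * ((K : ℤ) + 1)) * Gf q (K + 1) x ≤ q ^ K * Zf q 0 := by
  have h1 : q ^ (-(2 * x) * ((K : ℤ) + 1)) * Gf q (K + 1) x
      ≤ q ^ (-(2 * x) * ((K : ℤ) + 1)) * Zf q (K + 1) :=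
    mul_le_mul_of_nonneg_left (G_le_Z hq0 hq1) (zpow_nonneg hq0.le _)
  have h2 : q ^ (-(2 * x) * ((K : ℤ) + 1)) * Zf q (K + 1) = bb q x K * Zf q 0 := by
    rw [Z_formula hq0 hq1 (K + 1), ← mul_assoc, ← zpow_add₀ (ne_of_gt hq0), bb]
    congr 2
    push_cast
    ring
  calc q ^ (-(2 * x) * ((K : ℤ) + 1)) * Gf q (K + 1) x ≤ _ := h1
  _ = _ := h2
  _ ≤ q ^ K * Zf q 0 :=
    mul_le_mul_of_nonneg_right (bb_le hq0 hq1 hx K) (Z_pos hq0 hq1).le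

lemma series_value (hq0 : 0 < q) (hq1 : q < 1) (hx : x ≤ 0) :
    q ^ (-(2 * x)) * Gf q 1 x = ∑' k : ℕ, (-1 : ℝ) ^ k * (bb q x k * Zf q 0) := by
  have hsum := summable_series (x := x) hq0 hq1 hx
  have htsum := hsum.hasSum.tendsto_sum_nat
  have htail : Filter.Tendsto
      (fun K : ℕ => (-1 : ℝ) ^ K * (q ^ (-(2 * x) * ((K : ℤ) + 1)) * Gf q (K + 1) x))
      Filter.atTop (nhds 0) := by
    have hg : Filter.Tendsto (fun K : ℕ => q ^ K * Zf q 0) Filter.atTop (nhds 0) := by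
      simpa using (tendsto_pow_atTop_nhds_zero_of_lt_one hq0.le hq1).mul_const (Zf q 0)
    apply squeeze_zero_norm _ hg
    intro K
    rw [norm_mul, norm_pow, norm_neg, norm_one, one_pow, one_mul, Real.norm_eq_abs,
      abs_of_nonneg (mul_nonneg (zpow_nonneg hq0.le _) (G_nonneg hq0))]
    exact tail_le hq0 hq1 hx K
  have hps : ∀ K : ℕ, ∑ k ∈ Finset.range K, (-1 : ℝ) ^ k * (bb q x k * Zf q 0)
      = q ^ (-(2 * x)) * Gf q 1 x
        - (-1 : ℝ) ^ K * (q ^ (-(2 * x) * ((K : ℤ) + 1)) * Gf q (K + 1) x) := by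
    intro K
    have := partial_identity hq0 hq1 hx K
    linarith
  have h2 : Filter.Tendsto (fun K : ℕ => ∑ k ∈ Finset.range K, (-1 : ℝ) ^ k * (bb q x k * Zf q 0))
      Filter.atTop (nhds (q ^ (-(2 * x)) * Gf q 1 x - 0)) := by
    simp only [hps]
    exact Filter.Tendsto.sub tendsto_const_nhds htail
  rw [sub_zero] at h2
  exact tendsto_nhds_unique h2 htsum

lemma W0_split (hq0 : 0 < q) (hq1 : q < 1) (hx : x ≤ 0) :
    Wf q 0 x = q ^ (-(2 * x)) * Gf q 1 x - Zf q 0 / 2 := by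
  have hpt : ∀ p : KinkPairs 0, kinkWeight q p * spinAt x p
      = (if x ∈ p.val.1 then kinkWeight q p else 0) - kinkWeight q p / 2 := by
    intro p
    rw [spinAt]
    by_cases h : x ∈ p.val.1
    · rw [if_pos (Or.inl ⟨hx, h⟩), if_pos h]; ring
    · rw [if_neg, if_neg h]
      · ring
      · rintro (⟨h1, h2⟩ | ⟨h1, h2⟩)
        · exact h h2
        · omega
  have hsum_ind : Summable (fun p : KinkPairs 0 => if x ∈ p.val.1 then kinkWeight q p else 0) := by
    apply Summable.of_nonneg_of_le _ _ (summable_kw hq0 hq1)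
    · intro p; split_ifs; exacts [kw_nonneg hq0 p, le_refl 0]
    · intro p; split_ifs; exacts [le_refl _, kw_nonneg hq0 p]
  have hind : (∑' p : KinkPairs 0, if x ∈ p.val.1 then kinkWeight q p else 0)
      = q ^ (-(2 * x)) * Gf q 1 x := by
    rw [← tsum_in (n := 0) hq0 hq1 hx,
      show (∑' r : {p : KinkPairs 0 // x ∈ p.val.1}, kinkWeight q r.val)
        = ∑' r : ↥{p : KinkPairs 0 | x ∈ p.val.1}, kinkWeight q r.val from rfl,
      tsum_subtype {p : KinkPairs 0 | x ∈ p.val.1} (fun p => kinkWeight q p)]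
    apply tsum_congr; intro p
    by_cases h : x ∈ p.val.1
    · rw [if_pos h, Set.indicator_of_mem (by exact h)]
    · rw [if_neg h, Set.indicator_of_notMem (by exact h)]
  have hhalf : Summable (fun p : KinkPairs 0 => kinkWeight q p / 2) :=
    (summable_kw hq0 hq1).div_const 2
  rw [Wf, tsum_congr hpt, Summable.tsum_sub hsum_ind hhalf, hind, tsum_div_const]
  rfl

lemma main0 (hq0 : 0 < q) (hq1 : q < 1) (hx : x ≤ 0) :
    Wf q 0 x / Zf q 0 = -(1/2) + ∑' k : ℕ, (-1 : ℝ) ^ k * bb q x k := by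
  have hZ := Z_pos (n := 0) hq0 hq1
  have hZ' : Zf q 0 ≠ 0 := ne_of_gt hZ
  rw [W0_split hq0 hq1 hx, series_value hq0 hq1 hx]
  have : (∑' k : ℕ, (-1 : ℝ) ^ k * (bb q x k * Zf q 0))
      = (∑' k : ℕ, (-1 : ℝ) ^ k * bb q x k) * Zf q 0 := by
    rw [← tsum_mul_right]
    apply tsum_congr; intro k; ring
  rw [this]
  field_simp
  ring

lemma W0_reflect (hq1 : q < 1) (y : ℤ) : Wf q 0 y = -Wf q 0 (1 - y) := by
  rw [Wf, ← Equiv.tsum_eq eR (fun p => kinkWeight q p * spinAt y p)]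
  rw [tsum_congr (fun p => by rw [kw_eR, spin_eR y p])]
  rw [tsum_congr (fun p : KinkPairs 0 => by
    show kinkWeight q p * -spinAt (1 - y) p = -(kinkWeight q p * spinAt (1 - y) p)
    ring), tsum_neg]
  rfl

end Analysis
section Final
variable {q : ℝ}

lemma series_shift (hq0 : 0 < q) (M : ℤ) :
    (∑' k : ℕ, (-1:ℝ)^k * q ^ (((k:ℤ)+1)*((k:ℤ)+2*M)))
      = q ^ (2*M) * ∑' k : ℕ, (-1:ℝ)^k * q ^ ((k:ℤ)*((k:ℤ)+1+2*M)) := by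
  rw [← tsum_mul_left]
  apply tsum_congr; intro k
  rw [show ((k:ℤ)+1)*((k:ℤ)+2*M) = 2*M + (k:ℤ)*((k:ℤ)+1+2*M) by ring,
    zpow_add₀ (ne_of_gt hq0)]
  ring

end Final


/-- the magnetization profile `⟨S³_x⟩_n = W_x(n)/Z(n)` of the infinite-volume
kink ground state is given by the stated q-series, in the two regimes `n ≥ x` and `n ≤ x−1`. -/
theorem stmt4 (q : ℝ) (hq0 : 0 < q) (hq1 : q < 1) (n : ℕ) (x : ℤ) :
    Summable (fun p : KinkPairs n => kinkWeight q p) ∧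
    Summable (fun p : KinkPairs n => kinkWeight q p * spinAt x p) ∧
    (x ≤ (n : ℤ) →
      (∑' p : KinkPairs n, kinkWeight q p * spinAt x p) / (∑' p : KinkPairs n, kinkWeight q p)
        = -(1/2) + q ^ (2 * ((n : ℤ) + 1 - x)) *
            ∑' k : ℕ, (-1 : ℝ) ^ k * q ^ ((k : ℤ) * ((k : ℤ) + 1 + 2 * ((n : ℤ) + 1 - x)))) ∧
    ((n : ℤ) ≤ x - 1 →
      (∑' p : KinkPairs n, kinkWeight q p * spinAt x p) / (∑' p : KinkPairs n, kinkWeight q p)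
        = 1/2 - q ^ (2 * (x - (n : ℤ))) *
            ∑' k : ℕ, (-1 : ℝ) ^ k * q ^ ((k : ℤ) * ((k : ℤ) + 1 + 2 * (x - (n : ℤ))))) := by
  refine ⟨summable_kw hq0 hq1, summable_kw_spin hq0 hq1 x, ?_, ?_⟩
  · intro hxn
    show Wf q n x / Zf q n = _
    rw [ratio_reduction hq0 hq1 n x, main0 hq0 hq1 (by omega : x - (n:ℤ) ≤ 0)]
    congr 1
    calc (∑' k : ℕ, (-1:ℝ)^k * bb q (x - (n:ℤ)) k)
        = ∑' k : ℕ, (-1:ℝ)^k * q ^ (((k:ℤ)+1)*((k:ℤ)+2*((n:ℤ)+1-x))) := by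
          apply tsum_congr; intro k
          rw [bb]
          congr 2
          ring
    _ = q ^ (2*((n:ℤ)+1-x)) *
          ∑' k : ℕ, (-1:ℝ)^k * q ^ ((k:ℤ)*((k:ℤ)+1+2*((n:ℤ)+1-x))) :=
        series_shift hq0 ((n:ℤ)+1-x)
  · intro hxn
    show Wf q n x / Zf q n = _
    rw [ratio_reduction hq0 hq1 n x, W0_reflect hq1 (x - (n:ℤ)), neg_div,
      main0 hq0 hq1 (by omega : 1 - (x - (n:ℤ)) ≤ 0)]
    have hb : (∑' k : ℕ, (-1:ℝ)^k * bb q (1 - (x - (n:ℤ))) k)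
        = q ^ (2*(x-(n:ℤ))) *
          ∑' k : ℕ, (-1:ℝ)^k * q ^ ((k:ℤ)*((k:ℤ)+1+2*(x-(n:ℤ)))) := by
      calc (∑' k : ℕ, (-1:ℝ)^k * bb q (1 - (x - (n:ℤ))) k)
          = ∑' k : ℕ, (-1:ℝ)^k * q ^ (((k:ℤ)+1)*((k:ℤ)+2*(x-(n:ℤ)))) := by
            apply tsum_congr; intro k
            rw [bb]
            congr 2
            ring
      _ = _ := series_shift hq0 (x-(n:ℤ))
    rw [hb]
    ring
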